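/- Suppose the presentation ⟨X|R⟩ is side-confluent. For all integers n ≥ 1 and m ≥ l_N(n), the operators F_1^{n,m} and F_1^{n−1,m} ∨ F_2^{n−1,m} commute, where F_1^{n−1,m} ∨ F_2^{n−1,m} is the unique reduction operator relative to X^(m) with kernel ker(F_1^{n−1,m}) ∩ ker(F_2^{n−1,m}). More precisely, F_1^{n,m} commutes with F_2^{n−1,m}, and F_1^{n,m}∘F_1^{n−1,m} = F_1^{n−1,m}∘F_1^{n,m} = F_1^{n−1,m}. -/

import Mathlib

open scoped TensorProduct
set_option linter.unusedSectionVars false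

def altProd {A : Type*} [Monoid A] (t s : A) (k : ℕ) : A :=
  if Even k then (t * s) ^ (k / 2) else s * (t * s) ^ (k / 2)

namespace CC

variable (K : Type*) [Field K] (X : Type*) [Fintype X] [LinearOrder X]

abbrev F : Type _ := MonoidAlgebra K (FreeMonoid X)

noncomputable def wd (w : FreeMonoid X) : F K X := MonoidAlgebra.of K (FreeMonoid X) w

def wlen (w : FreeMonoid X) : ℕ := (FreeMonoid.toList w).length

noncomputable instance : LinearOrder (FreeMonoid X) :=
  LinearOrder.lift' (fun w => FreeMonoid.toList w) (fun _ _ h => FreeMonoid.toList.injective h)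

noncomputable def lm (f : F K X) : FreeMonoid X := WithBot.unbotD 1 (f.coeff.support.max)

/-- The homogeneous component `V^{⊗m} = KX^{(m)}` of `K⟨X⟩`:
elements supported on words of length `m`. -/
noncomputable def degSub (m : ℕ) : Submodule K (F K X) where
  carrier := {f | ∀ w ∈ f.coeff.support, wlen X w = m}
  add_mem' := by
    intro a b ha hb w hw
    have hw' : w ∈ (a.coeff + b.coeff).support := hw
    rcases Finset.mem_union.mp (Finsupp.support_add hw') with h | h
    · exact ha w h
    · exact hb w h
  zero_mem' := by intro w hw; simp at hw
  smul_mem' := by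
    intro c f hf w hw
    have hw' : w ∈ (c • f.coeff).support := hw
    exact hf w (Finsupp.support_smul hw')

lemma mem_degSub {m : ℕ} {f : F K X} :
    f ∈ degSub K X m ↔ ∀ w ∈ f.coeff.support, wlen X w = m := Iff.rfl

/-- `l_N(2k) = kN`, `l_N(2k+1) = kN + 1`. -/
def lN (N n : ℕ) : ℕ := if Even n then (n / 2) * N else (n / 2) * N + 1

/-- The homogeneous component `I(R)_m` of the two-sided ideal generated by `R`:
`I(R)_m = Σ_{i=0}^{m−N} V^{⊗i}·R̄·V^{⊗m−N−i}` for `m ≥ N` and `I(R)_m = 0` for `m < N`. -/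
noncomputable def idealPiece (N : ℕ) (R : Set (F K X)) (m : ℕ) : Submodule K (F K X) :=
  if m < N then ⊥
  else ⨆ i ∈ Finset.range (m - N + 1),
    degSub K X i * Submodule.span K R * degSub K X (m - N - i)

/-- The two-sided ideal `I(R)` of `K⟨X⟩` generated by `R`, as a `K`-subspace. -/
noncomputable def idealSpan (R : Set (F K X)) : Submodule K (F K X) :=
  Submodule.span K {x | ∃ u v : FreeMonoid X, ∃ g ∈ R, x = wd K X u * g * wd K X v}

/-- `J_0 = K`, `J_1 = V`, and `J_n = ⋂_{i=0}^{l_N(n)−N} V^{⊗i}·R̄·V^{⊗l_N(n)−N−i}` for `n ≥ 2`. -/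
noncomputable def Jspace (N : ℕ) (R : Set (F K X)) : ℕ → Submodule K (F K X)
  | 0 => degSub K X 0
  | 1 => degSub K X 1
  | (n + 2) => ⨅ i ∈ Finset.range (lN N (n + 2) - N + 1),
      degSub K X i * Submodule.span K R * degSub K X (lN N (n + 2) - N - i)

open Classical in
/-- The reduction `r_{u·g·v}` of the presentation `⟨X|R⟩`: the linear endomorphism of `K⟨X⟩`
fixing every word other than `u·lm(g)·v` and sending `u·lm(g)·v` to `u·(lm(g)−g)·v`. -/
noncomputable def redMap (u : FreeMonoid X) (g : F K X) (v : FreeMonoid X) :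
    F K X →ₗ[K] F K X :=
  Finsupp.linearCombination K (fun w : FreeMonoid X =>
    if w = u * lm K X g * v then wd K X u * (wd K X (lm K X g) - g) * wd K X v
    else wd K X w) ∘ₗ
    (MonoidAlgebra.coeffLinearEquiv K).toLinearMap

/-- `f` is a normal form for `⟨X|R⟩` if it is fixed by every reduction. -/
def IsNormalForm (R : Set (F K X)) (f : F K X) : Prop :=
  ∀ u v : FreeMonoid X, ∀ g ∈ R, redMap K X u g v f = f

/-- `g` is a normal form of `f`: `g` is a normal form and is obtained from `f` by applying a
finite sequence of reductions of `⟨X|R⟩`. -/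
def NormalFormOf (R : Set (F K X)) (f g : F K X) : Prop :=
  IsNormalForm K X R g ∧
    ∃ L : List (FreeMonoid X × F K X × FreeMonoid X),
      (∀ p ∈ L, p.2.1 ∈ R) ∧
      g = L.foldr (fun p h => redMap K X p.1 p.2.1 p.2.2 h) f

/-- The presentation `⟨X|R⟩` is reduced: for every `f ∈ R`, `lm(f) − f` is a normal form for
`⟨X|R⟩` and `lm(f)` is a normal form for `⟨X | R∖{f}⟩`. -/
def Reduced (R : Set (F K X)) : Prop :=
  ∀ f ∈ R, IsNormalForm K X R (wd K X (lm K X f) - f) ∧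
    IsNormalForm K X (R \ {f}) (wd K X (lm K X f))

/-- `R` consists of `N`-homogeneous elements with leading coefficient `1`. -/
def NHomogLC1 (N : ℕ) (R : Set (F K X)) : Prop :=
  ∀ f ∈ R, f ∈ degSub K X N ∧ f.coeff (lm K X f) = 1

open Classical in
/-- The operator `S` of the presentation `⟨X|R⟩`: the endomorphism of `V^{⊗N}` sending `lm(f)`
to `lm(f) − f` for every `f ∈ R` and fixing all other words (extended by the identity on words
of other lengths). -/
noncomputable def Sop (R : Set (F K X)) : F K X →ₗ[K] F K X :=
  Finsupp.linearCombination K (fun w : FreeMonoid X =>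
    if h : ∃ f ∈ R, lm K X f = w then wd K X w - h.choose else wd K X w) ∘ₗ
    (MonoidAlgebra.coeffLinearEquiv K).toLinearMap

/-- `S ⊗ id_{V^{⊗b}}` realized on `K⟨X⟩`: on a word of length `a + b`, apply `S` to the first
`a` letters and the identity to the last `b` letters; the identity on all other words. -/
noncomputable def applyLeft (S : F K X →ₗ[K] F K X) (a b : ℕ) : F K X →ₗ[K] F K X :=
  Finsupp.linearCombination K (fun w : FreeMonoid X =>
    if wlen X w = a + b then
      S (wd K X (FreeMonoid.ofList ((FreeMonoid.toList w).take a))) *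
        wd K X (FreeMonoid.ofList ((FreeMonoid.toList w).drop a))
    else wd K X w) ∘ₗ
    (MonoidAlgebra.coeffLinearEquiv K).toLinearMap

/-- `id_{V^{⊗a}} ⊗ S` realized on `K⟨X⟩`: on a word of length `a + b`, apply the identity to
the first `a` letters and `S` to the last `b` letters; the identity on all other words. -/
noncomputable def applyRight (S : F K X →ₗ[K] F K X) (a b : ℕ) : F K X →ₗ[K] F K X :=
  Finsupp.linearCombination K (fun w : FreeMonoid X =>
    if wlen X w = a + b then
      wd K X (FreeMonoid.ofList ((FreeMonoid.toList w).take a)) *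
        S (wd K X (FreeMonoid.ofList ((FreeMonoid.toList w).drop a)))
    else wd K X w) ∘ₗ
    (MonoidAlgebra.coeffLinearEquiv K).toLinearMap

/-- The presentation `⟨X|R⟩` is side-confluent: for every `1 ≤ m ≤ N−1` there exists `k ≥ 1`
with `⟨id_{V^{⊗m}}⊗S, S⊗id_{V^{⊗m}}⟩^k = ⟨S⊗id_{V^{⊗m}}, id_{V^{⊗m}}⊗S⟩^k` on `V^{⊗N+m}`. -/
def SideConfluent (N : ℕ) (R : Set (F K X)) : Prop :=
  ∀ m : ℕ, 1 ≤ m → m ≤ N - 1 →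
    ∃ k : ℕ, 1 ≤ k ∧
      ∀ f ∈ degSub K X (N + m),
        altProd (applyRight K X (Sop K X R) m N) (applyLeft K X (Sop K X R) N m) k f =
          altProd (applyLeft K X (Sop K X R) N m) (applyRight K X (Sop K X R) m N) k f

/-- The extra-condition: `(V^{⊗n}⊗R̄) ∩ (R̄⊗V^{⊗n}) ⊆ V^{⊗n−1}⊗R̄⊗V` for every `2 ≤ n ≤ N−1`. -/
def ExtraCondition (N : ℕ) (R : Set (F K X)) : Prop :=
  ∀ n : ℕ, 2 ≤ n → n ≤ N - 1 →
    (degSub K X n * Submodule.span K R) ⊓ (Submodule.span K R * degSub K X n) ≤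
      degSub K X (n - 1) * Submodule.span K R * degSub K X 1

/-- A reduction operator relative to `X^{(m)}`, realized as a linear endomorphism of `K⟨X⟩`
extended by the identity outside of `V^{⊗m}`: an idempotent operator fixing each word of
length `m` or mapping it to an element of `V^{⊗m}` all of whose monomials are strictly
smaller. -/
structure IsRedOp (m : ℕ) (T : F K X →ₗ[K] F K X) : Prop where
  idem : T ∘ₗ T = T
  le : ∀ w : FreeMonoid X, wlen X w = m →
    T (wd K X w) = wd K X w ∨
      (T (wd K X w) ∈ degSub K X m ∧ ∀ u ∈ (T (wd K X w)).coeff.support, u < w)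
  other : ∀ w : FreeMonoid X, wlen X w ≠ m → T (wd K X w) = wd K X w

/-- The kernel `I(R)_{m−l_N(n)} ⊗ V^{⊗l_N(n)}` of the reduction operator `F_1^{n,m}`. -/
noncomputable def ker1 (N : ℕ) (R : Set (F K X)) (n m : ℕ) : Submodule K (F K X) :=
  idealPiece K X N R (m - lN N n) * degSub K X (lN N n)

/-- The kernel of the reduction operator `F_2^{n,m}`: `⊥` if `m < l_N(n+1)` (so that
`F_2^{n,m} = id`), and `V^{⊗m−l_N(n+1)} ⊗ J_{n+1}` otherwise. -/
noncomputable def ker2 (N : ℕ) (R : Set (F K X)) (n m : ℕ) : Submodule K (F K X) :=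
  if m < lN N (n + 1) then ⊥
  else degSub K X (m - lN N (n + 1)) * Jspace K X N R (n + 1)

/-- The span of the normal words of length `d`, i.e. `φ(V^{⊗d})` where `φ` is the
normal-form map. -/
noncomputable def nfSub (R : Set (F K X)) (d : ℕ) : Submodule K (F K X) :=
  Submodule.span K
    {x | ∃ w : FreeMonoid X, wlen X w = d ∧ IsNormalForm K X R (wd K X w) ∧ x = wd K X w}

/-- `Γ = (id − T2)·Σ_{i odd, 1 ≤ i ≤ k−1} ⟨T2,T1⟩^i`, the image of the element `γ1` of the
confluence algebra under the `(T1,T2)`-representation. -/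
noncomputable def Gamma (T1 T2 : F K X →ₗ[K] F K X) (k : ℕ) : F K X →ₗ[K] F K X :=
  (1 - T2) * ∑ i ∈ (Finset.Icc 1 (k - 1)).filter (fun i => Odd i), altProd T2 T1 i

end CC

namespace CCAux
open CC
open scoped Classical

variable {K : Type*} [Field K] {X : Type*} [Fintype X] [LinearOrder X]

/-! ### Order lemmas on words -/

lemma fm_lt_iff (u v : FreeMonoid X) :
    u < v ↔ List.Lex (· < ·) (FreeMonoid.toList u) (FreeMonoid.toList v) := Iff.rfl

lemma lex_append_of_lex {u u' : List X} (h : List.Lex (· < ·) u u')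
    (hlen : u.length = u'.length) (v v' : List X) :
    List.Lex (· < ·) (u ++ v) (u' ++ v') := by
  induction h with
  | nil => simp at hlen
  | rel h => exact List.Lex.rel h
  | @cons a l₁ l₂ h ih => exact List.Lex.cons (ih (by simpa using hlen))

lemma lex_append_left {v v' : List X} (h : List.Lex (· < ·) v v') (u : List X) :
    List.Lex (· < ·) (u ++ v) (u ++ v') := by
  induction u with
  | nil => exact h
  | cons a t ih => exact List.Lex.cons ih

lemma mul_lt_mul_words {u u' : FreeMonoid X} (h : u < u') (hlen : wlen X u = wlen X u')
    (v v' : FreeMonoid X) : u * v < u' * v' := by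
  rw [fm_lt_iff] at h ⊢
  rw [FreeMonoid.toList_mul, FreeMonoid.toList_mul]
  exact lex_append_of_lex h hlen _ _

lemma mul_lt_mul_right_words {v v' : FreeMonoid X} (h : v < v') (u : FreeMonoid X) :
    u * v < u * v' := by
  rw [fm_lt_iff] at h ⊢
  rw [FreeMonoid.toList_mul, FreeMonoid.toList_mul]
  exact lex_append_left h _

lemma mul_le_mul_words {u u' v v' : FreeMonoid X} (hlen : wlen X u = wlen X u')
    (hu : u ≤ u') (hv : v ≤ v') : u * v ≤ u' * v' := by
  rcases eq_or_lt_of_le hu with rfl | hu'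
  · rcases eq_or_lt_of_le hv with rfl | hv'
    · exact le_refl _
    · exact le_of_lt (mul_lt_mul_right_words hv' u)
  · exact le_of_lt (mul_lt_mul_words hu' hlen v v')

lemma le_of_mul_le_mul_words {u u' v v' : FreeMonoid X} (hlen : wlen X u = wlen X u')
    (h : u * v ≤ u' * v') : u ≤ u' := by
  by_contra hc
  push_neg at hc
  exact absurd h (not_le.mpr (mul_lt_mul_words hc hlen.symm v' v))

lemma le_of_mul_le_mul_right_words {u v v' : FreeMonoid X}
    (h : u * v ≤ u * v') : v ≤ v' := by
  by_contra hc
  push_neg at hc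
  exact absurd h (not_le.mpr (mul_lt_mul_right_words hc u))

lemma wlen_mul (u v : FreeMonoid X) : wlen X (u * v) = wlen X u + wlen X v := by
  simp [wlen, FreeMonoid.toList_mul]

/-- splitting a word of length `p + q` -/
lemma word_split {w : FreeMonoid X} {p q : ℕ} (h : wlen X w = p + q) :
    ∃ u v : FreeMonoid X, w = u * v ∧ wlen X u = p ∧ wlen X v = q := by
  refine ⟨FreeMonoid.ofList ((FreeMonoid.toList w).take p),
    FreeMonoid.ofList ((FreeMonoid.toList w).drop p), ?_, ?_, ?_⟩
  · apply FreeMonoid.toList.injective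
    rw [FreeMonoid.toList_mul]
    simp [List.take_append_drop]
  · simp only [wlen] at h
    simp [wlen]; omega
  · simp only [wlen] at h
    simp [wlen]; omega

lemma mul_left_cancel_words {u v v' : FreeMonoid X} (h : u * v = u * v') : v = v' :=
  mul_left_cancel h

lemma mul_eq_mul_words {u u' v v' : FreeMonoid X} (hlen : wlen X u = wlen X u')
    (h : u * v = u' * v') : u = u' ∧ v = v' := by
  have := List.append_inj (by
    simpa [FreeMonoid.toList_mul] using congrArg FreeMonoid.toList h) hlen
  exact ⟨FreeMonoid.toList.injective this.1, FreeMonoid.toList.injective this.2⟩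

end CCAux

namespace CCAux2
open CC CCAux
open scoped Classical

variable {K : Type*} [Field K] {X : Type*} [Fintype X] [LinearOrder X]

/-! ### `wd` and `lm` lemmas -/

lemma wd_def (u : FreeMonoid X) : wd K X u = MonoidAlgebra.single u (1 : K) := rfl

lemma wd_coeff (u : FreeMonoid X) : (wd K X u).coeff = Finsupp.single u (1 : K) := rfl

lemma wd_apply (u v : FreeMonoid X) :
    (wd K X u).coeff v = if v = u then (1 : K) else 0 := by
  rw [wd_coeff, Finsupp.single_apply]
  simp [eq_comm]

lemma wd_mul (u v : FreeMonoid X) : wd K X (u * v) = wd K X u * wd K X v :=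
  map_mul (MonoidAlgebra.of K (FreeMonoid X)) u v

lemma wd_ne_zero (u : FreeMonoid X) : wd K X u ≠ 0 := by
  rw [wd_def]
  simp [MonoidAlgebra.single_eq_zero]

lemma wd_support (u : FreeMonoid X) : (wd K X u).coeff.support = {u} := by
  rw [wd_coeff]
  exact Finsupp.support_single_ne_zero u one_ne_zero

lemma wd_mem_degSub (u : FreeMonoid X) : wd K X u ∈ degSub K X (wlen X u) := by
  intro w hw
  rw [wd_support] at hw
  rw [Finset.mem_singleton.mp hw]

lemma repr_sum (f : F K X) : f = f.coeff.sum fun w c => c • wd K X w := by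
  conv_lhs => rw [← MonoidAlgebra.sum_coeff_single f]
  refine Finsupp.sum_congr fun w _ => ?_
  rw [wd_def, MonoidAlgebra.smul_single', mul_one]

lemma lm_mem_support {f : F K X} (hf : f ≠ 0) : lm K X f ∈ f.coeff.support := by
  have h : f.coeff.support.Nonempty := Finsupp.support_nonempty_iff.mpr (MonoidAlgebra.coeff_eq_zero.not.mpr hf)
  obtain ⟨a, ha⟩ := Finset.max_of_nonempty h
  have : lm K X f = a := by simp [lm, ha]
  rw [this]
  exact Finset.mem_of_max ha

lemma le_lm {f : F K X} {w : FreeMonoid X} (hw : w ∈ f.coeff.support) : w ≤ lm K X f := by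
  have hf : f ≠ 0 := by
    intro h; subst h; simp at hw
  have h : f.coeff.support.Nonempty := Finsupp.support_nonempty_iff.mpr (MonoidAlgebra.coeff_eq_zero.not.mpr hf)
  obtain ⟨a, ha⟩ := Finset.max_of_nonempty h
  have hla : lm K X f = a := by simp [lm, ha]
  rw [hla]
  have := Finset.le_max hw
  rw [ha] at this
  exact_mod_cast this

lemma lm_eq {f : F K X} {w : FreeMonoid X} (hw : w ∈ f.coeff.support)
    (hmax : ∀ u ∈ f.coeff.support, u ≤ w) : lm K X f = w := by
  have hf : f ≠ 0 := by intro h; subst h; simp at hw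
  exact le_antisymm (hmax _ (lm_mem_support hf)) (le_lm hw)

lemma apply_lm_ne_zero {f : F K X} (hf : f ≠ 0) : f.coeff (lm K X f) ≠ 0 :=
  Finsupp.mem_support_iff.mp (lm_mem_support hf)

/-! ### `degSub` lemmas -/

lemma degSub_mul_le (p q : ℕ) :
    degSub K X p * degSub K X q ≤ degSub K X (p + q) := by
  rw [Submodule.mul_le]
  intro a ha b hb w hw
  have := MonoidAlgebra.support_coeff_mul_subset a b hw
  rw [Finset.mem_mul] at this
  obtain ⟨u, hu, v, hv, rfl⟩ := this
  rw [wlen_mul, ha u hu, hb v hv]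

lemma le_degSub_mul (p q : ℕ) :
    degSub K X (p + q) ≤ degSub K X p * degSub K X q := by
  intro f hf
  rw [repr_sum f]
  refine Submodule.sum_mem _ fun w hw => Submodule.smul_mem _ _ ?_
  obtain ⟨u, v, rfl, hu, hv⟩ := word_split (hf w hw)
  rw [wd_mul]
  exact Submodule.mul_mem_mul (hu ▸ wd_mem_degSub u) (hv ▸ wd_mem_degSub v)

/-- coefficient of a homogeneous product at the product of leading words -/
lemma mul_apply_lm {p q : ℕ} {a b : F K X} (ha : a ∈ degSub K X p) (hb : b ∈ degSub K X q)
    (ha0 : a ≠ 0) (hb0 : b ≠ 0) :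
      (a * b).coeff (lm K X a * lm K X b) = a.coeff (lm K X a) * b.coeff (lm K X b) := by
  rw [MonoidAlgebra.coeff_mul]
  rw [Finsupp.sum_eq_single (lm K X a)]
  · rw [Finsupp.sum_eq_single (lm K X b)]
    · simp
    · intro v hv hvne
      have : lm K X a * v ≠ lm K X a * lm K X b := fun h => hvne (mul_left_cancel h)
      simp [this]
    · intro h
      simp
  · intro u hu hune
    apply Finset.sum_eq_zero
    intro v hv
    have : u * v ≠ lm K X a * lm K X b := by
      intro h
      have hul : wlen X u = p := ha u (Finsupp.mem_support_iff.mpr hu)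
      have hll : wlen X (lm K X a) = p := ha _ (lm_mem_support ha0)
      exact hune (mul_eq_mul_words (by rw [hul, hll]) h).1
    simp [this]
  · intro h
    apply Finset.sum_eq_zero
    intro v hv
    simp

lemma supp_mul_le_lm {p q : ℕ} {a b : F K X} (ha : a ∈ degSub K X p) (hb : b ∈ degSub K X q)
    (ha0 : a ≠ 0) {w : FreeMonoid X} (hw : w ∈ (a * b).coeff.support) :
    w ≤ lm K X a * lm K X b := by
  have := MonoidAlgebra.support_coeff_mul_subset a b hw
  rw [Finset.mem_mul] at this
  obtain ⟨u, hu, v, hv, rfl⟩ := this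
  exact mul_le_mul_words
    (by rw [ha u hu, ha _ (lm_mem_support ha0)]) (le_lm hu) (le_lm hv)

lemma lm_mul {p q : ℕ} {a b : F K X} (ha : a ∈ degSub K X p) (hb : b ∈ degSub K X q)
    (ha0 : a ≠ 0) (hb0 : b ≠ 0) :
    a * b ≠ 0 ∧ lm K X (a * b) = lm K X a * lm K X b := by
  have hcoeff : (a * b).coeff (lm K X a * lm K X b) ≠ 0 := by
    rw [mul_apply_lm ha hb ha0 hb0]
    exact mul_ne_zero (apply_lm_ne_zero ha0) (apply_lm_ne_zero hb0)
  have hmem : lm K X a * lm K X b ∈ (a * b).coeff.support := Finsupp.mem_support_iff.mpr hcoeff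
  refine ⟨fun h => by simp [h] at hcoeff, ?_⟩
  exact lm_eq hmem fun u hu => supp_mul_le_lm ha hb ha0 hu

end CCAux2

namespace CCAux3
open CC CCAux CCAux2
open scoped Classical

variable {K : Type*} [Field K] {X : Type*} [Fintype X] [LinearOrder X]
variable {m : ℕ} {T : F K X →ₗ[K] F K X}

lemma idem_apply (hT : IsRedOp K X m T) (f : F K X) : T (T f) = T f :=
  DFunLike.congr_fun hT.idem f

lemma nonfix_len (hT : IsRedOp K X m T) {w : FreeMonoid X}
    (h : T (wd K X w) ≠ wd K X w) : wlen X w = m := by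
  by_contra hc
  exact h (hT.other w hc)

lemma nonfix_props (hT : IsRedOp K X m T) {w : FreeMonoid X}
    (h : T (wd K X w) ≠ wd K X w) :
    T (wd K X w) ∈ degSub K X m ∧ ∀ u ∈ (T (wd K X w)).coeff.support, u < w := by
  rcases hT.le w (nonfix_len hT h) with h' | h'
  · exact absurd h' h
  · exact h'

lemma apply_eq_sum (T : F K X →ₗ[K] F K X) (f : F K X) :
    T f = f.coeff.sum fun w c => c • T (wd K X w) := by
  conv_lhs => rw [repr_sum f]
  rw [map_finsuppSum]
  exact Finsupp.sum_congr fun w _ => by rw [map_smul]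

lemma coeff_eq_sum (T : F K X →ₗ[K] F K X) (f : F K X) (u : FreeMonoid X) :
    (T f).coeff u = f.coeff.sum fun w c => c * (T (wd K X w)).coeff u := by
  rw [apply_eq_sum T f, MonoidAlgebra.coeff_finsuppSum, Finsupp.sum_apply]
  exact Finsupp.sum_congr fun w _ => by rw [MonoidAlgebra.coeff_smul, Finsupp.smul_apply, smul_eq_mul]

lemma fix_of_words (T : F K X →ₗ[K] F K X) {f : F K X}
    (h : ∀ w ∈ f.coeff.support, T (wd K X w) = wd K X w) : T f = f := by
  rw [apply_eq_sum T f]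
  conv_rhs => rw [repr_sum f]
  exact Finsupp.sum_congr fun w hw => by rw [h w hw]

/-- a `T`-fixed element is supported on `T`-fixed words -/
lemma fixed_supp (hT : IsRedOp K X m T) {f : F K X} (hfix : T f = f) :
    ∀ w ∈ f.coeff.support, T (wd K X w) = wd K X w := by
  by_contra hc
  push_neg at hc
  set B := f.coeff.support.filter (fun w => T (wd K X w) ≠ wd K X w) with hB
  have hBne : B.Nonempty := by
    obtain ⟨w, hw, hne⟩ := hc
    exact ⟨w, Finset.mem_filter.mpr ⟨hw, hne⟩⟩
  set w₀ := B.max' hBne with hw₀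
  have hw₀B : w₀ ∈ B := Finset.max'_mem _ _
  have hw₀s : w₀ ∈ f.coeff.support := (Finset.mem_filter.mp hw₀B).1
  have hw₀ne : T (wd K X w₀) ≠ wd K X w₀ := (Finset.mem_filter.mp hw₀B).2
  have hzero : (T f).coeff w₀ = 0 := by
    rw [coeff_eq_sum]
    apply Finset.sum_eq_zero
    intro w hw
    dsimp only
    by_cases hfw : T (wd K X w) = wd K X w
    · rw [hfw, wd_apply]
      have : w₀ ≠ w := by
        rintro rfl
        exact hw₀ne hfw
      simp [this]
    · have hwB : w ∈ B := Finset.mem_filter.mpr ⟨hw, hfw⟩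
      have hle : w ≤ w₀ := Finset.le_max' _ _ hwB
      have : (T (wd K X w)).coeff w₀ = 0 := by
        by_contra h0
        have := (nonfix_props hT hfw).2 w₀ (Finsupp.mem_support_iff.mpr h0)
        exact absurd hle (not_le.mpr this)
      rw [this, mul_zero]
  rw [hfix] at hzero
  exact Finsupp.mem_support_iff.mp hw₀s hzero

/-- the leading word of a non-zero kernel element is not `T`-fixed -/
lemma ker_lm_nonfix (hT : IsRedOp K X m T) {f : F K X} (hker : T f = 0) (hf0 : f ≠ 0) :
    T (wd K X (lm K X f)) ≠ wd K X (lm K X f) := by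
  intro hfix
  have hzero : (T f).coeff (lm K X f) = f.coeff (lm K X f) := by
    rw [coeff_eq_sum]
    rw [Finsupp.sum_eq_single (lm K X f)]
    · rw [hfix, wd_apply]
      simp
    · intro w hw hne
      have hlt : w < lm K X f :=
        lt_of_le_of_ne (le_lm (Finsupp.mem_support_iff.mpr hw)) hne
      by_cases hfw : T (wd K X w) = wd K X w
      · rw [hfw, wd_apply]
        simp [ne_of_gt hlt]
      · have : (T (wd K X w)).coeff (lm K X f) = 0 := by
          by_contra h0
          have := (nonfix_props hT hfw).2 _ (Finsupp.mem_support_iff.mpr h0)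
          exact absurd (lt_trans this hlt) (lt_irrefl _)
        rw [this, mul_zero]
    · intro h
      simp
  rw [hker] at hzero
  exact apply_lm_ne_zero hf0 hzero.symm

/-- the canonical kernel element attached to a non-fixed word -/
lemma nonfix_ker_elt (hT : IsRedOp K X m T) {w : FreeMonoid X}
    (hne : T (wd K X w) ≠ wd K X w) :
    T (wd K X w - T (wd K X w)) = 0 ∧ wd K X w - T (wd K X w) ≠ 0 ∧
      lm K X (wd K X w - T (wd K X w)) = w := by
  have h1 : T (wd K X w - T (wd K X w)) = 0 := by
    rw [map_sub, idem_apply hT, sub_self]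
  have hprops := nonfix_props hT hne
  have hcoeff : (wd K X w - T (wd K X w)).coeff w = 1 := by
    have : (T (wd K X w)).coeff w = 0 := by
      by_contra h0
      exact absurd ((hprops.2) w (Finsupp.mem_support_iff.mpr h0)) (lt_irrefl _)
    rw [MonoidAlgebra.coeff_sub, Finsupp.sub_apply, this, wd_apply]
    simp
  have h2 : wd K X w - T (wd K X w) ≠ 0 := by
    intro h
    rw [h] at hcoeff
    simp at hcoeff
  have hsupp : ∀ u ∈ (wd K X w - T (wd K X w)).coeff.support, u ≤ w := by
    intro u hu
    have hu' : u ∈ ((wd K X w).coeff - (T (wd K X w)).coeff).support := hu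
    have := Finsupp.support_sub hu'
    rcases Finset.mem_union.mp this with h | h
    · rw [wd_support] at h
      exact le_of_eq (Finset.mem_singleton.mp h)
    · exact le_of_lt (hprops.2 u h)
  have h3 : lm K X (wd K X w - T (wd K X w)) = w :=
    lm_eq (Finsupp.mem_support_iff.mpr (by rw [hcoeff]; exact one_ne_zero)) hsupp
  exact ⟨h1, h2, h3⟩

/-- kernel inclusion transfers non-fixed words -/
lemma nonfix_mono {T' : F K X →ₗ[K] F K X} {m' : ℕ} (hT : IsRedOp K X m T)
    (hT' : IsRedOp K X m' T')
    (hker : ∀ f, T f = 0 → T' f = 0) {w : FreeMonoid X}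
    (hne : T (wd K X w) ≠ wd K X w) : T' (wd K X w) ≠ wd K X w := by
  obtain ⟨h1, h2, h3⟩ := nonfix_ker_elt hT hne
  have := ker_lm_nonfix hT' (hker _ h1) h2
  rwa [h3] at this

/-- kernel inclusion gives absorption: `T' ∘ T = T'` and `T ∘ T' = T'` -/
lemma absorb {T' : F K X →ₗ[K] F K X} {m' : ℕ} (hT : IsRedOp K X m T)
    (hT' : IsRedOp K X m' T')
    (hker : ∀ f, T f = 0 → T' f = 0) :
    T' ∘ₗ T = T' ∧ T ∘ₗ T' = T' := by
  constructor
  · refine LinearMap.ext fun f => ?_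
    simp only [LinearMap.comp_apply]
    have : T' (T f - f) = 0 := hker _ (by rw [map_sub, idem_apply hT, sub_self])
    rw [map_sub] at this
    exact sub_eq_zero.mp this
  · refine LinearMap.ext fun f => ?_
    simp only [LinearMap.comp_apply]
    apply fix_of_words
    intro w hw
    by_contra hne
    exact absurd (fixed_supp hT' (idem_apply hT' f) w hw) (nonfix_mono hT hT' hker hne)

/-- the commutation criterion -/
lemma commute_crit {P Q : F K X →ₗ[K] F K X} (hQ : ∀ f, Q (Q f) = Q f)
    (hfix : ∀ f, Q f = f → Q (P f) = P f)
    (hker : ∀ f, Q f = 0 → Q (P f) = 0) :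
    P ∘ₗ Q = Q ∘ₗ P := by
  refine LinearMap.ext fun f => ?_
  simp only [LinearMap.comp_apply]
  have h1 : Q (P (Q f)) = P (Q f) := hfix _ (hQ f)
  have h2 : Q (P (f - Q f)) = 0 := hker _ (by rw [map_sub, hQ, sub_self])
  calc P (Q f) = Q (P (Q f)) + Q (P (f - Q f)) := by rw [h1, h2, add_zero]
    _ = Q (P (Q f) + P (f - Q f)) := by rw [map_add]
    _ = Q (P f) := by
        rw [← map_add]
        congr 1
        congr 1
        abel

end CCAux3

namespace CCAux4
open CC CCAux CCAux2 CCAux3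
open scoped Classical

variable (K : Type*) [Field K] (X : Type*) [Fintype X] [LinearOrder X]

/-- right extraction: coefficient-wise `f ↦ (u ↦ f (u * y))` on the degree-`(p + |y|)` part -/
noncomputable def exR (p : ℕ) (y : FreeMonoid X) : F K X →ₗ[K] F K X :=
  Finsupp.linearCombination K (fun w : FreeMonoid X =>
    if wlen X w = p + wlen X y ∧ FreeMonoid.ofList ((FreeMonoid.toList w).drop p) = y
    then wd K X (FreeMonoid.ofList ((FreeMonoid.toList w).take p)) else 0) ∘ₗ
    (MonoidAlgebra.coeffLinearEquiv K).toLinearMap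

/-- left extraction: coefficient-wise `f ↦ (v ↦ f (x * v))` on the degree-`(|x| + q)` part -/
noncomputable def exL (x : FreeMonoid X) (q : ℕ) : F K X →ₗ[K] F K X :=
  Finsupp.linearCombination K (fun w : FreeMonoid X =>
    if wlen X w = wlen X x + q ∧ FreeMonoid.ofList ((FreeMonoid.toList w).take (wlen X x)) = x
    then wd K X (FreeMonoid.ofList ((FreeMonoid.toList w).drop (wlen X x))) else 0) ∘ₗ
    (MonoidAlgebra.coeffLinearEquiv K).toLinearMap

variable {K X}

lemma exR_eq (p : ℕ) (y : FreeMonoid X) (f : F K X) :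
    exR K X p y f = f.coeff.sum fun w c => c •
      (if wlen X w = p + wlen X y ∧ FreeMonoid.ofList ((FreeMonoid.toList w).drop p) = y
       then wd K X (FreeMonoid.ofList ((FreeMonoid.toList w).take p)) else 0) := rfl

lemma exL_eq (x : FreeMonoid X) (q : ℕ) (f : F K X) :
    exL K X x q f = f.coeff.sum fun w c => c •
      (if wlen X w = wlen X x + q ∧
          FreeMonoid.ofList ((FreeMonoid.toList w).take (wlen X x)) = x
       then wd K X (FreeMonoid.ofList ((FreeMonoid.toList w).drop (wlen X x))) else 0) := rfl

lemma take_mul (u v : FreeMonoid X) :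
    FreeMonoid.ofList ((FreeMonoid.toList (u * v)).take (wlen X u)) = u := by
  apply FreeMonoid.toList.injective
  simp [FreeMonoid.toList_mul, wlen, List.take_append]

lemma drop_mul (u v : FreeMonoid X) :
    FreeMonoid.ofList ((FreeMonoid.toList (u * v)).drop (wlen X u)) = v := by
  apply FreeMonoid.toList.injective
  simp [FreeMonoid.toList_mul, wlen, List.drop_append]

lemma wd_mem_degSub' {u : FreeMonoid X} {d : ℕ} (h : wlen X u = d) :
    wd K X u ∈ degSub K X d := h ▸ wd_mem_degSub u

lemma exR_wd (p : ℕ) (y w : FreeMonoid X) :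
    exR K X p y (wd K X w) =
      if wlen X w = p + wlen X y ∧ FreeMonoid.ofList ((FreeMonoid.toList w).drop p) = y
      then wd K X (FreeMonoid.ofList ((FreeMonoid.toList w).take p)) else 0 := by
  rw [exR_eq, wd_coeff, Finsupp.sum_single_index (by simp), one_smul]

lemma exL_wd (x : FreeMonoid X) (q : ℕ) (w : FreeMonoid X) :
    exL K X x q (wd K X w) =
      if wlen X w = wlen X x + q ∧ FreeMonoid.ofList ((FreeMonoid.toList w).take (wlen X x)) = x
      then wd K X (FreeMonoid.ofList ((FreeMonoid.toList w).drop (wlen X x))) else 0 := by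
  rw [exL_eq, wd_coeff, Finsupp.sum_single_index (by simp), one_smul]

lemma exR_wd_mul {p : ℕ} {u : FreeMonoid X} (hu : wlen X u = p) (y v : FreeMonoid X) :
    exR K X p y (wd K X (u * v)) = if v = y then wd K X u else 0 := by
  rw [exR_wd]
  by_cases hv : v = y
  · subst hv
    rw [if_pos ⟨by rw [wlen_mul, hu], by rw [← hu, drop_mul]⟩, ← hu, take_mul]
    simp
  · rw [if_neg, if_neg hv]
    rintro ⟨h1, h2⟩
    rw [← hu, drop_mul] at h2
    exact hv h2

lemma exL_wd_mul {q : ℕ} {v : FreeMonoid X} (hv : wlen X v = q) (x u : FreeMonoid X) :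
    exL K X x q (wd K X (u * v)) = if u = x then wd K X v else 0 := by
  rw [exL_wd]
  by_cases hu : u = x
  · subst hu
    rw [if_pos ⟨by rw [wlen_mul, hv], take_mul u v⟩, drop_mul]
    simp
  · rw [if_neg, if_neg hu]
    rintro ⟨h1, h2⟩
    have hlen : wlen X u = wlen X x := by
      rw [wlen_mul, hv] at h1
      omega
    rw [← hlen, take_mul] at h2
    exact hu h2

lemma exR_mem_degSub (p : ℕ) (y : FreeMonoid X) (f : F K X) :
    exR K X p y f ∈ degSub K X p := by
  rw [exR_eq]
  refine Submodule.sum_mem _ fun w _ => Submodule.smul_mem _ _ ?_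
  split_ifs with h
  · have : wlen X (FreeMonoid.ofList ((FreeMonoid.toList w).take p)) = p := by
      simp [wlen] at h ⊢
      omega
    exact wd_mem_degSub' this
  · exact Submodule.zero_mem _

lemma exL_mem_degSub (x : FreeMonoid X) (q : ℕ) (f : F K X) :
    exL K X x q f ∈ degSub K X q := by
  rw [exL_eq]
  refine Submodule.sum_mem _ fun w _ => Submodule.smul_mem _ _ ?_
  split_ifs with h
  · have : wlen X (FreeMonoid.ofList ((FreeMonoid.toList w).drop (wlen X x))) = q := by
      simp [wlen] at h ⊢
      omega
    exact wd_mem_degSub' this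
  · exact Submodule.zero_mem _

lemma exR_mul {p : ℕ} {a : F K X} (ha : a ∈ degSub K X p) (y v : FreeMonoid X) :
    exR K X p y (a * wd K X v) = if v = y then a else 0 := by
  have : a * wd K X v = a.coeff.sum fun u c => c • (wd K X (u * v)) := by
    conv_lhs => rw [repr_sum a]
    rw [Finsupp.sum_mul]
    exact Finsupp.sum_congr fun u _ => by rw [smul_mul_assoc, wd_mul]
  rw [this, map_finsuppSum]
  have : (a.coeff.sum fun u c => exR K X p y (c • wd K X (u * v)))
      = a.coeff.sum fun u c => c • (if v = y then wd K X u else 0) := by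
    refine Finsupp.sum_congr fun u hu => ?_
    rw [map_smul, exR_wd_mul (ha u hu) y v]
  rw [this]
  split_ifs with h
  · conv_rhs => rw [repr_sum a]
  · simp

lemma exL_mul {q : ℕ} {b : F K X} (hb : b ∈ degSub K X q) (x u : FreeMonoid X) :
    exL K X x q (wd K X u * b) = if u = x then b else 0 := by
  have : wd K X u * b = b.coeff.sum fun v c => c • (wd K X (u * v)) := by
    conv_lhs => rw [repr_sum b]
    rw [Finsupp.mul_sum]
    exact Finsupp.sum_congr fun v _ => by rw [mul_smul_comm, wd_mul]
  rw [this, map_finsuppSum]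
  have : (b.coeff.sum fun v c => exL K X x q (c • wd K X (u * v)))
      = b.coeff.sum fun v c => c • (if u = x then wd K X v else 0) := by
    refine Finsupp.sum_congr fun v hv => ?_
    rw [map_smul, exL_wd_mul (hb v hv) x u]
  rw [this]
  split_ifs with h
  · conv_rhs => rw [repr_sum b]
  · simp

lemma exR_mem {p q : ℕ} {A : Submodule K (F K X)} (hA : A ≤ degSub K X p)
    {f : F K X} (hf : f ∈ A * degSub K X q) (y : FreeMonoid X) :
    exR K X p y f ∈ A := by
  refine Submodule.mul_induction_on hf ?_ ?_
  · intro a ha g hg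
    have : a * g = g.coeff.sum fun v c => c • (a * wd K X v) := by
      conv_lhs => rw [repr_sum g]
      rw [Finsupp.mul_sum]
      exact Finsupp.sum_congr fun v _ => by rw [mul_smul_comm]
    rw [this, map_finsuppSum]
    refine Submodule.sum_mem _ fun v _ => ?_
    beta_reduce
    rw [map_smul, exR_mul (hA ha) y v]
    split_ifs
    · exact Submodule.smul_mem _ _ ha
    · simp
  · intro f g hfm hgm
    rw [map_add]
    exact Submodule.add_mem _ hfm hgm

lemma exL_mem {p q : ℕ} {B : Submodule K (F K X)} (hB : B ≤ degSub K X q)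
    {f : F K X} (hf : f ∈ degSub K X p * B) (x : FreeMonoid X) :
    exL K X x q f ∈ B := by
  refine Submodule.mul_induction_on hf ?_ ?_
  · intro g hg b hb
    have : g * b = g.coeff.sum fun u c => c • (wd K X u * b) := by
      conv_lhs => rw [repr_sum g]
      rw [Finsupp.sum_mul]
      exact Finsupp.sum_congr fun u _ => by rw [smul_mul_assoc]
    rw [this, map_finsuppSum]
    refine Submodule.sum_mem _ fun u _ => ?_
    beta_reduce
    rw [map_smul, exL_mul (hB hb) x u]
    split_ifs
    · exact Submodule.smul_mem _ _ hb
    · simp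
  · intro f g hfm hgm
    rw [map_add]
    exact Submodule.add_mem _ hfm hgm

lemma exR_apply {p : ℕ} (y : FreeMonoid X) (f : F K X) {u : FreeMonoid X}
    (hu : wlen X u = p) : (exR K X p y f).coeff u = f.coeff (u * y) := by
  rw [exR_eq, MonoidAlgebra.coeff_finsuppSum, Finsupp.sum_apply]
  rw [Finsupp.sum_eq_single (u * y)]
  · rw [MonoidAlgebra.coeff_smul, Finsupp.smul_apply]
    rw [if_pos ⟨by rw [wlen_mul, hu], by rw [← hu, drop_mul]⟩]
    rw [← hu, take_mul, wd_apply, if_pos rfl, smul_eq_mul, mul_one]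
  · intro w hw hne
    rw [MonoidAlgebra.coeff_smul, Finsupp.smul_apply]
    split_ifs with hcond
    · rw [wd_apply]
      have : u ≠ FreeMonoid.ofList ((FreeMonoid.toList w).take p) := by
        intro he
        apply hne
        apply FreeMonoid.toList.injective
        rw [FreeMonoid.toList_mul, ← hcond.2]
        have : FreeMonoid.toList u = (FreeMonoid.toList w).take p := congrArg _ he
        rw [this]
        simp [List.take_append_drop]
      rw [if_neg this, smul_eq_mul, mul_zero]
    · simp
  · intro _
    simp

lemma exL_apply {q : ℕ} (x : FreeMonoid X) (f : F K X) {v : FreeMonoid X}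
    (hv : wlen X v = q) : (exL K X x q f).coeff v = f.coeff (x * v) := by
  rw [exL_eq, MonoidAlgebra.coeff_finsuppSum, Finsupp.sum_apply]
  rw [Finsupp.sum_eq_single (x * v)]
  · rw [MonoidAlgebra.coeff_smul, Finsupp.smul_apply]
    rw [if_pos ⟨by rw [wlen_mul, hv], take_mul x v⟩]
    rw [drop_mul, wd_apply, if_pos rfl, smul_eq_mul, mul_one]
  · intro w hw hne
    rw [MonoidAlgebra.coeff_smul, Finsupp.smul_apply]
    split_ifs with hcond
    · rw [wd_apply]
      have : v ≠ FreeMonoid.ofList ((FreeMonoid.toList w).drop (wlen X x)) := by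
        intro he
        apply hne
        apply FreeMonoid.toList.injective
        rw [FreeMonoid.toList_mul, ← congrArg FreeMonoid.toList hcond.2]
        have : FreeMonoid.toList v = (FreeMonoid.toList w).drop (wlen X x) := congrArg _ he
        rw [this]
        simp [List.take_append_drop]
      rw [if_neg this, smul_eq_mul, mul_zero]
    · simp
  · intro _
    simp

/-- leading-word behaviour of right extraction -/
lemma exR_lm {p : ℕ} {f : F K X} {w₁ y : FreeMonoid X}
    (hflm : lm K X f = w₁ * y) (hf0 : f ≠ 0) (hw₁ : wlen X w₁ = p) :
    exR K X p y f ≠ 0 ∧ lm K X (exR K X p y f) = w₁ := by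
  have hcoeff : (exR K X p y f).coeff w₁ = f.coeff (w₁ * y) := exR_apply y f hw₁
  have hne : (exR K X p y f).coeff w₁ ≠ 0 := by
    rw [hcoeff, ← hflm]
    exact apply_lm_ne_zero hf0
  have hne0 : exR K X p y f ≠ 0 := fun h => hne (by rw [h]; simp)
  refine ⟨hne0, lm_eq (Finsupp.mem_support_iff.mpr hne) fun u hu => ?_⟩
  have hul : wlen X u = p := exR_mem_degSub p y f u hu
  have : f.coeff (u * y) ≠ 0 := by
    rw [← exR_apply y f hul]
    exact Finsupp.mem_support_iff.mp hu
  have hle : u * y ≤ w₁ * y := by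
    rw [← hflm]
    exact le_lm (Finsupp.mem_support_iff.mpr this)
  exact le_of_mul_le_mul_words (by rw [hul, hw₁]) hle

/-- leading-word behaviour of left extraction -/
lemma exL_lm {q : ℕ} {f : F K X} {x w₂ : FreeMonoid X}
    (hflm : lm K X f = x * w₂) (hf0 : f ≠ 0) (hw₂ : wlen X w₂ = q) :
    exL K X x q f ≠ 0 ∧ lm K X (exL K X x q f) = w₂ := by
  have hcoeff : (exL K X x q f).coeff w₂ = f.coeff (x * w₂) := exL_apply x f hw₂
  have hne : (exL K X x q f).coeff w₂ ≠ 0 := by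
    rw [hcoeff, ← hflm]
    exact apply_lm_ne_zero hf0
  have hne0 : exL K X x q f ≠ 0 := fun h => hne (by rw [h]; simp)
  refine ⟨hne0, lm_eq (Finsupp.mem_support_iff.mpr hne) fun v hv => ?_⟩
  have hvl : wlen X v = q := exL_mem_degSub x q f v hv
  have : f.coeff (x * v) ≠ 0 := by
    rw [← exL_apply x f hvl]
    exact Finsupp.mem_support_iff.mp hv
  have hle : x * v ≤ x * w₂ := by
    rw [← hflm]
    exact le_lm (Finsupp.mem_support_iff.mpr this)
  exact le_of_mul_le_mul_right_words hle

end CCAux4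

namespace CCAux5
open CC CCAux CCAux2 CCAux3 CCAux4
open scoped Classical

variable {K : Type*} [Field K] {X : Type*} [Fintype X] [LinearOrder X]
variable {N : ℕ} {R : Set (F K X)}

lemma spanR_le (hhom : NHomogLC1 K X N R) : Submodule.span K R ≤ degSub K X N := by
  rw [Submodule.span_le]
  intro f hf
  exact (hhom f hf).1

lemma idealPiece_le_degSub (hhom : NHomogLC1 K X N R) (a : ℕ) :
    idealPiece K X N R a ≤ degSub K X a := by
  rw [idealPiece]
  split_ifs with h
  · exact bot_le
  · refine iSup₂_le fun i hi => ?_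
    rw [Finset.mem_range] at hi
    have h1 : degSub K X i * Submodule.span K R * degSub K X (a - N - i)
        ≤ degSub K X (i + N + (a - N - i)) := by
      refine le_trans (mul_le_mul'
        (mul_le_mul' (le_refl _) (spanR_le hhom)) (le_refl _)) ?_
      exact le_trans (mul_le_mul' (degSub_mul_le i N) (le_refl _))
        (degSub_mul_le (i + N) (a - N - i))
    have : i + N + (a - N - i) = a := by omega
    rwa [this] at h1

lemma idealPiece_mul_degSub (N : ℕ) (R : Set (F K X)) (a d : ℕ) :
    idealPiece K X N R a * degSub K X d ≤ idealPiece K X N R (a + d) := by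
  by_cases h : a < N
  · rw [idealPiece, if_pos h, Submodule.bot_mul]
    exact bot_le
  · rw [idealPiece, if_neg h, Submodule.iSup_mul]
    refine iSup_le fun i => ?_
    rw [Submodule.iSup_mul]
    refine iSup_le fun hi => ?_
    rw [Finset.mem_range] at hi
    have h1 : degSub K X i * Submodule.span K R * degSub K X (a - N - i) * degSub K X d
        ≤ degSub K X i * Submodule.span K R * degSub K X (a + d - N - i) := by
      rw [mul_assoc]
      refine mul_le_mul' (le_refl _) ?_
      have := degSub_mul_le (K := K) (X := X) (a - N - i) d
      have harith : a - N - i + d = a + d - N - i := by omega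
      rwa [harith] at this
    refine le_trans h1 ?_
    rw [idealPiece, if_neg (by omega)]
    have hmem : i ∈ Finset.range (a + d - N + 1) := Finset.mem_range.mpr (by omega)
    exact le_iSup₂ (f := fun i _ => degSub K X i * Submodule.span K R *
      degSub K X (a + d - N - i)) i hmem

lemma lN_le_succ (hN : 1 ≤ N) (j : ℕ) : lN N j ≤ lN N (j + 1) := by
  rcases Nat.even_or_odd j with he | ho
  · obtain ⟨k, rfl⟩ := he
    have h0 : Even (k + k) := ⟨k, rfl⟩
    have h1 : ¬ Even (k + k + 1) := by simp [Nat.even_add_one, h0]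
    have h2 : (k + k) / 2 = k := by omega
    have h3 : (k + k + 1) / 2 = k := by omega
    simp only [lN, if_pos h0, if_neg h1, h2, h3]
    omega
  · obtain ⟨k, rfl⟩ := ho
    have h1 : ¬ Even (2 * k + 1) := by simp [Nat.even_add_one, parity_simps]
    have h2 : Even (2 * k + 1 + 1) := by
      refine ⟨k + 1, by ring⟩
    have h3 : (2 * k + 1) / 2 = k := by omega
    have h4 : (2 * k + 1 + 1) / 2 = k + 1 := by omega
    simp only [lN, if_neg h1, if_pos h2, h3, h4]
    calc k * N + 1 ≤ k * N + N := by omega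
      _ = (k + 1) * N := by ring

lemma lN_one : lN N 1 = 1 := by
  have : ¬ Even 1 := by simp
  simp [lN, this]

lemma lN_ge (hN : 1 ≤ N) {n : ℕ} (hn : 2 ≤ n) : N ≤ lN N n := by
  rcases Nat.even_or_odd n with he | ho
  · obtain ⟨k, rfl⟩ := he
    have h0 : Even (k + k) := ⟨k, rfl⟩
    have h2 : (k + k) / 2 = k := by omega
    simp only [lN, if_pos h0, h2]
    have hk : 1 ≤ k := by omega
    calc N = 1 * N := (one_mul N).symm
      _ ≤ k * N := Nat.mul_le_mul_right N hk
  · obtain ⟨k, rfl⟩ := ho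
    have h1 : ¬ Even (2 * k + 1) := by simp [Nat.even_add_one, parity_simps]
    have h3 : (2 * k + 1) / 2 = k := by omega
    simp only [lN, if_neg h1, h3]
    have hk : 1 ≤ k := by omega
    calc N = 1 * N := (one_mul N).symm
      _ ≤ k * N := Nat.mul_le_mul_right N hk
      _ ≤ k * N + 1 := by omega

lemma Jspace_le_degSub (hhom : NHomogLC1 K X N R) (hN : 1 ≤ N) {n : ℕ} (hn : 1 ≤ n) :
    Jspace K X N R n ≤ degSub K X (lN N n) := by
  match n with
  | 1 =>
    rw [lN_one]
    exact le_refl _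
  | (k + 2) =>
    have hge : N ≤ lN N (k + 2) := lN_ge hN (by omega)
    have h0 : (0 : ℕ) ∈ Finset.range (lN N (k + 2) - N + 1) := by
      simp
    refine le_trans (biInf_le _ h0) ?_
    have h1 : degSub K X 0 * Submodule.span K R * degSub K X (lN N (k + 2) - N - 0)
        ≤ degSub K X (0 + N + (lN N (k + 2) - N - 0)) := by
      refine le_trans (mul_le_mul'
        (mul_le_mul' (le_refl _) (spanR_le hhom)) (le_refl _)) ?_
      exact le_trans (mul_le_mul' (degSub_mul_le 0 N) (le_refl _))
        (degSub_mul_le (0 + N) _)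
    have : 0 + N + (lN N (k + 2) - N - 0) = lN N (k + 2) := by omega
    rwa [this] at h1

lemma ker1_mono (hN : 1 ≤ N) {n m : ℕ} (hn : 1 ≤ n) (hnm : lN N n ≤ m) :
    ker1 K X N R n m ≤ ker1 K X N R (n - 1) m := by
  have hle : lN N (n - 1) ≤ lN N n := by
    have := lN_le_succ (N := N) hN (n - 1)
    have hn1 : n - 1 + 1 = n := by omega
    rwa [hn1] at this
  set l' := lN N (n - 1) with hl'
  set l := lN N n with hl
  have hd : l = (l - l') + l' := by omega
  rw [ker1, ker1]
  calc idealPiece K X N R (m - l) * degSub K X l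
      ≤ idealPiece K X N R (m - l) * (degSub K X (l - l') * degSub K X l') := by
        refine mul_le_mul' (le_refl _) ?_
        conv_lhs => rw [hd]
        exact le_degSub_mul _ _
    _ = (idealPiece K X N R (m - l) * degSub K X (l - l')) * degSub K X l' := by
        rw [mul_assoc]
    _ ≤ idealPiece K X N R (m - l + (l - l')) * degSub K X l' :=
        mul_le_mul' (idealPiece_mul_degSub N R _ _) (le_refl _)
    _ = idealPiece K X N R (m - l') * degSub K X l' := by
        have : m - l + (l - l') = m - l' := by omega
        rw [this]

lemma ker2_eq {n m : ℕ} (hn : 1 ≤ n) (hnm : lN N n ≤ m) :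
    ker2 K X N R (n - 1) m = degSub K X (m - lN N n) * Jspace K X N R n := by
  have hn1 : n - 1 + 1 = n := by omega
  rw [ker2, hn1, if_neg (by omega)]

end CCAux5

namespace CCAux6
open CC CCAux CCAux2 CCAux3 CCAux4 CCAux5
open scoped Classical

variable {K : Type*} [Field K] {X : Type*} [Fintype X] [LinearOrder X]

noncomputable def wordsOf (X : Type*) [Fintype X] [LinearOrder X] (d : ℕ) :
    Finset (FreeMonoid X) :=
  (Finset.univ : Finset (Fin d → X)).image (fun g => FreeMonoid.ofList (List.ofFn g))

lemma repr_fsum (f : F K X) : f = ∑ w ∈ f.coeff.support, f.coeff w • wd K X w := repr_sum f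

lemma mem_wordsOf {d : ℕ} {w : FreeMonoid X} (h : wlen X w = d) : w ∈ wordsOf X d := by
  rw [wordsOf, Finset.mem_image]
  subst h
  refine ⟨(FreeMonoid.toList w).get, Finset.mem_univ _, ?_⟩
  apply FreeMonoid.toList.injective
  have := List.ofFn_get (FreeMonoid.toList w)
  simpa [wlen] using this

noncomputable def wmeasure (X : Type*) [Fintype X] [LinearOrder X] (d : ℕ)
    (x : FreeMonoid X) : ℕ :=
  ((wordsOf X d).filter (· < x)).card

lemma wmeasure_lt {d : ℕ} {u x : FreeMonoid X} (hu : wlen X u = d) (hlt : u < x) :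
    wmeasure X d u < wmeasure X d x := by
  apply Finset.card_lt_card
  constructor
  · intro v hv
    rw [Finset.mem_filter] at hv ⊢
    exact ⟨hv.1, lt_trans hv.2 hlt⟩
  · intro hsub
    have : u ∈ (wordsOf X d).filter (· < x) :=
      Finset.mem_filter.mpr ⟨mem_wordsOf hu, hlt⟩
    have := hsub this
    rw [Finset.mem_filter] at this
    exact absurd this.2 (lt_irrefl u)

/-- **Block structure of a reduction operator with left-sided kernel.**
If `ker T = A ⊗ V^{⊗l}` then `T (xy) = g_x · y` with `g_x` independent of `y`. -/
lemma claimstar {m p l : ℕ} {T : F K X →ₗ[K] F K X} (hT : IsRedOp K X m T)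
    {A : Submodule K (F K X)} (hA : A ≤ degSub K X p) (hm : m = p + l)
    (hker : ∀ f, T f = 0 ↔ f ∈ A * degSub K X l) :
    ∀ x : FreeMonoid X, wlen X x = p →
      ∃ g ∈ degSub K X p, ∀ y : FreeMonoid X, wlen X y = l →
        T (wd K X (x * y)) = g * wd K X y := by
  suffices H : ∀ c : ℕ, ∀ x : FreeMonoid X, wlen X x = p → wmeasure X p x = c →
      ∃ g ∈ degSub K X p, ∀ y : FreeMonoid X, wlen X y = l →
        T (wd K X (x * y)) = g * wd K X y by
    intro x hx
    exact H (wmeasure X p x) x hx rfl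
  intro c
  induction c using Nat.strong_induction_on with
  | _ c ih =>
    intro x hx hc
    by_cases hex : ∃ y₀ : FreeMonoid X, wlen X y₀ = l ∧
        T (wd K X (x * y₀)) ≠ wd K X (x * y₀)
    · obtain ⟨y₀, hy₀l, hy₀⟩ := hex
      obtain ⟨hkf, hf0, hflm⟩ := nonfix_ker_elt hT hy₀
      set f := wd K X (x * y₀) - T (wd K X (x * y₀)) with hfdef
      have hfA : f ∈ A * degSub K X l := (hker f).mp hkf
      have haA : exR K X p y₀ f ∈ A := exR_mem hA hfA y₀
      set a := exR K X p y₀ f with hadef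
      obtain ⟨ha0, halm⟩ := exR_lm hflm hf0 hx
      have hax : a.coeff x ≠ 0 := by
        rw [← halm]
        exact apply_lm_ne_zero ha0
      set h := wd K X x - (a.coeff x)⁻¹ • a with hhdef
      have hhp : h ∈ degSub K X p := by
        refine Submodule.sub_mem _ (wd_mem_degSub' hx) (Submodule.smul_mem _ _ (hA haA))
      have hhx : h.coeff x = 0 := by
        rw [hhdef, MonoidAlgebra.coeff_sub, Finsupp.sub_apply, MonoidAlgebra.coeff_smul, Finsupp.smul_apply, wd_apply, if_pos rfl,
          smul_eq_mul, inv_mul_cancel₀ hax, sub_self]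
      have hhlt : ∀ u ∈ h.coeff.support, u < x := by
        intro u hu
        have hne : u ≠ x := by
          intro he
          rw [he] at hu
          exact Finsupp.mem_support_iff.mp hu hhx
        have hu' : u ∈ ((wd K X x).coeff - (a.coeff x)⁻¹ • a.coeff).support := hu
        rcases Finset.mem_union.mp (Finsupp.support_sub hu') with h' | h'
        · rw [wd_support] at h'
          exact absurd (Finset.mem_singleton.mp h') hne
        · have := Finsupp.support_smul h'
          have hle : u ≤ lm K X a := le_lm this
          rw [halm] at hle
          exact lt_of_le_of_ne hle hne
      -- choose g_u for each u in the support of h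
      have hch : ∀ u : {u // u ∈ h.coeff.support}, ∃ g, g ∈ degSub K X p ∧
          ∀ y : FreeMonoid X, wlen X y = l → T (wd K X (u.1 * y)) = g * wd K X y := by
        rintro ⟨u, hu⟩
        have hul : wlen X u = p := hhp u hu
        have := ih (wmeasure X p u) (by
          rw [← hc]
          exact wmeasure_lt hul (hhlt u hu)) u hul rfl
        obtain ⟨g, hg1, hg2⟩ := this
        exact ⟨g, hg1, hg2⟩
      choose g hg1 hg2 using hch
      refine ⟨∑ u ∈ h.coeff.support.attach, h.coeff u.1 • g u, ?_, ?_⟩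
      · exact Submodule.sum_mem _ fun u _ => Submodule.smul_mem _ _ (hg1 u)
      · intro y hyl
        have hay : T (a * wd K X y) = 0 :=
          (hker _).mpr (Submodule.mul_mem_mul haA (wd_mem_degSub' hyl))
        have hxdec : wd K X x = h + (a.coeff x)⁻¹ • a := by
          rw [hhdef]; abel
        have h1 : T (wd K X (x * y)) = T (h * wd K X y) := by
          rw [wd_mul, hxdec, add_mul, smul_mul_assoc, map_add, map_smul, hay,
            smul_zero, add_zero]
        have h2 : h * wd K X y = ∑ u ∈ h.coeff.support.attach, h.coeff u.1 • (wd K X u.1 * wd K X y) := by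
          conv_lhs => rw [repr_fsum h]
          rw [Finset.sum_mul]
          rw [← Finset.sum_attach h.coeff.support (fun u => h.coeff u • wd K X u * wd K X y)]
          exact Finset.sum_congr rfl fun u _ => by rw [smul_mul_assoc]
        rw [h1, h2, map_sum, Finset.sum_mul]
        refine Finset.sum_congr rfl fun u _ => ?_
        rw [map_smul, ← wd_mul, hg2 u y hyl, smul_mul_assoc]
    · push_neg at hex
      refine ⟨wd K X x, wd_mem_degSub' hx, fun y hyl => ?_⟩
      rw [hex y hyl, wd_mul]

end CCAux6

namespace CCAux7
open CC CCAux CCAux2 CCAux3 CCAux4 CCAux5 CCAux6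
open scoped Classical

variable {K : Type*} [Field K] {X : Type*} [Fintype X] [LinearOrder X]

lemma lm_wd (w : FreeMonoid X) : lm K X (wd K X w) = w := by
  refine lm_eq ?_ ?_
  · rw [wd_support]
    exact Finset.mem_singleton_self w
  · intro u hu
    rw [wd_support, Finset.mem_singleton] at hu
    exact le_of_eq hu

theorem main (K : Type*) [Field K] (X : Type*) [Fintype X] [LinearOrder X]
    (N : ℕ) (hN : 2 ≤ N) (R : Set (F K X))
    (hhom : NHomogLC1 K X N R)
    (n m : ℕ) (hn : 1 ≤ n) (hnm : lN N n ≤ m)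
    (T1n T1p T2p U : F K X →ₗ[K] F K X)
    (hT1n : IsRedOp K X m T1n) (hkT1n : LinearMap.ker T1n = ker1 K X N R n m)
    (hT1p : IsRedOp K X m T1p) (hkT1p : LinearMap.ker T1p = ker1 K X N R (n - 1) m)
    (hT2p : IsRedOp K X m T2p) (hkT2p : LinearMap.ker T2p = ker2 K X N R (n - 1) m)
    (hU : IsRedOp K X m U)
    (hkU : LinearMap.ker U = LinearMap.ker T1p ⊓ LinearMap.ker T2p) :
    T1n ∘ₗ U = U ∘ₗ T1n ∧
    T1n ∘ₗ T2p = T2p ∘ₗ T1n ∧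
    T1n ∘ₗ T1p = T1p ∧
    T1p ∘ₗ T1n = T1p := by
  have hN1 : 1 ≤ N := by omega
  set l := lN N n with hldef
  have hml : m = (m - l) + l := by omega
  -- kernel membership criteria
  have hker1iff : ∀ f : F K X, T1n f = 0 ↔
      f ∈ idealPiece K X N R (m - l) * degSub K X l := by
    intro f
    rw [← LinearMap.mem_ker, hkT1n, ker1]
  have hker2iff : ∀ f : F K X, T2p f = 0 ↔
      f ∈ degSub K X (m - l) * Jspace K X N R n := by
    intro f
    rw [← LinearMap.mem_ker, hkT2p, ker2_eq hn hnm]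
  have hJdeg : Jspace K X N R n ≤ degSub K X l := Jspace_le_degSub hhom hN1 hn
  have hIdeg : idealPiece K X N R (m - l) ≤ degSub K X (m - l) :=
    idealPiece_le_degSub hhom (m - l)
  -- T1n kernel inclusion into T1p kernel
  have hker13 : ∀ f : F K X, T1n f = 0 → T1p f = 0 := by
    intro f hf
    rw [← LinearMap.mem_ker, hkT1p]
    exact ker1_mono hN1 hn hnm (by rw [← hkT1n]; exact LinearMap.mem_ker.mpr hf)
  -- block structure of T1n
  have hblock : ∀ x : FreeMonoid X, wlen X x = m - l →
      ∃ g ∈ degSub K X (m - l), ∀ y : FreeMonoid X, wlen X y = l →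
        T1n (wd K X (x * y)) = g * wd K X y :=
    claimstar hT1n hIdeg hml hker1iff
  -- T2p-nonfixedness only depends on the right block
  have hnonfixR : ∀ u w₁ w₂ : FreeMonoid X, wlen X u = m - l → wlen X w₁ = m - l →
      wlen X w₂ = l → T1n (wd K X u) = wd K X u ∨ True →
      T2p (wd K X (u * w₂)) ≠ wd K X (u * w₂) →
      T2p (wd K X (w₁ * w₂)) ≠ wd K X (w₁ * w₂) := by
    intro u w₁ w₂ hu hw₁ hw₂ _ hne
    obtain ⟨hk0, hkne, hklm⟩ := nonfix_ker_elt hT2p hne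
    set k := wd K X (u * w₂) - T2p (wd K X (u * w₂)) with hkdef
    have hkmem : k ∈ degSub K X (m - l) * Jspace K X N R n := (hker2iff k).mp hk0
    have hbJ : exL K X u l k ∈ Jspace K X N R n := exL_mem hJdeg hkmem u
    obtain ⟨hb0, hblm⟩ := exL_lm hklm hkne hw₂
    have hbdeg : exL K X u l k ∈ degSub K X l := exL_mem_degSub u l k
    set b := exL K X u l k with hbdef
    have hz0 : T2p (wd K X w₁ * b) = 0 :=
      (hker2iff _).mpr (Submodule.mul_mem_mul (wd_mem_degSub' hw₁) hbJ)
    obtain ⟨hzne, hzlm⟩ := lm_mul (wd_mem_degSub' hw₁) hbdeg (wd_ne_zero w₁) hb0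
    have := ker_lm_nonfix hT2p hz0 hzne
    rw [hzlm, lm_wd, hblm] at this
    exact this
  -- Conclusion 2 : T1n and T2p commute
  have concl2 : T1n ∘ₗ T2p = T2p ∘ₗ T1n := by
    refine commute_crit (idem_apply hT2p) ?_ ?_
    · -- fixed part
      intro f hf
      have hws := fixed_supp hT2p hf
      have hword : ∀ w ∈ f.coeff.support, T2p (T1n (wd K X w)) = T1n (wd K X w) := by
        intro w hw
        by_cases hlen : wlen X w = m
        · obtain ⟨w₁, w₂, rfl, hw₁, hw₂⟩ := word_split (show wlen X w = (m - l) + l by omega)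
          obtain ⟨g, hg, hgy⟩ := hblock w₁ hw₁
          rw [hgy w₂ hw₂]
          apply fix_of_words
          intro v hv
          have := MonoidAlgebra.support_coeff_mul_subset g (wd K X w₂) hv
          rw [Finset.mem_mul] at this
          obtain ⟨u, hu, v', hv', rfl⟩ := this
          rw [wd_support, Finset.mem_singleton] at hv'
          subst hv'
          by_contra hne
          exact hnonfixR u w₁ _ (hg u hu) hw₁ hw₂ (Or.inr trivial) hne
            (hws _ hw)
        · rw [hT1n.other w hlen]
          exact hws w hw
      calc T2p (T1n f) = f.coeff.sum fun w c => c • T2p (T1n (wd K X w)) := by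
            rw [apply_eq_sum T1n f, map_finsuppSum]
            exact Finsupp.sum_congr fun w _ => by rw [map_smul]
        _ = f.coeff.sum fun w c => c • T1n (wd K X w) :=
            Finsupp.sum_congr fun w hw => by rw [hword w hw]
        _ = T1n f := (apply_eq_sum T1n f).symm
    · -- kernel part
      intro f hf
      have hfmem : f ∈ degSub K X (m - l) * Jspace K X N R n := (hker2iff f).mp hf
      refine (hker2iff (T1n f)).mpr ?_
      refine Submodule.mul_induction_on hfmem ?_ ?_
      · intro g hg b hb
        have hbdeg : b ∈ degSub K X l := hJdeg hb
        have hgb : g * b = ∑ u ∈ g.coeff.support, g.coeff u • (wd K X u * b) := by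
          conv_lhs => rw [repr_fsum g]
          rw [Finset.sum_mul]
          exact Finset.sum_congr rfl fun u _ => by rw [smul_mul_assoc]
        rw [hgb, map_sum]
        refine Submodule.sum_mem _ ?_
        intro u hu
        rw [map_smul]
        refine Submodule.smul_mem _ _ ?_
        obtain ⟨gu, hgu, hguy⟩ := hblock u (hg u hu)
        have hub : wd K X u * b = ∑ y ∈ b.coeff.support, b.coeff y • wd K X (u * y) := by
          conv_lhs => rw [repr_fsum b]
          rw [Finset.mul_sum]
          exact Finset.sum_congr rfl fun y _ => by rw [mul_smul_comm, wd_mul]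
        have hT1nub : T1n (wd K X u * b) = gu * b := by
          rw [hub, map_sum]
          have : ∀ y ∈ b.coeff.support, T1n (b.coeff y • wd K X (u * y)) = b.coeff y • (gu * wd K X y) := by
            intro y hy
            rw [map_smul, hguy y (hbdeg y hy)]
          rw [Finset.sum_congr rfl this]
          conv_rhs => rw [repr_fsum b]
          rw [Finset.mul_sum]
          exact Finset.sum_congr rfl fun y _ => by rw [mul_smul_comm]
        rw [hT1nub]
        exact Submodule.mul_mem_mul hgu hb
      · intro p q hp hq
        rw [map_add]
        exact Submodule.add_mem _ hp hq
  -- Conclusions 3 and 4 : absorption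
  have habs := absorb hT1n hT1p hker13
  -- kernel of U is contained in kernel of T2p
  have hkerU2 : ∀ f : F K X, U f = 0 → T2p f = 0 := by
    intro f hf
    have : f ∈ LinearMap.ker U := LinearMap.mem_ker.mpr hf
    rw [hkU] at this
    exact LinearMap.mem_ker.mp (Submodule.mem_inf.mp this).2
  -- Conclusion 1 : T1n and U commute
  have concl1 : T1n ∘ₗ U = U ∘ₗ T1n := by
    refine commute_crit (idem_apply hU) ?_ ?_
    · -- fixed part
      intro f hf
      have hws := fixed_supp hU hf
      have hword : ∀ w ∈ f.coeff.support, U (T1n (wd K X w)) = T1n (wd K X w) := by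
        intro w hw
        by_cases hlen : wlen X w = m
        · by_cases h1 : T1n (wd K X w) = wd K X w
          · rw [h1]
            exact hws w hw
          · by_cases h2 : T2p (wd K X w) = wd K X w
            · obtain ⟨hk0, hkne, hklm⟩ := nonfix_ker_elt hT1n h1
              set k := wd K X w - T1n (wd K X w) with hkdef
              have hcomm : T2p (T1n (wd K X w)) = T1n (T2p (wd K X w)) :=
                (DFunLike.congr_fun concl2 (wd K X w)).symm
              have hT2pk : T2p k = k := by
                rw [hkdef, map_sub, h2, hcomm, h2]
              have hUk : U k = k := by
                apply fix_of_words
                intro v hv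
                have hT2pv := fixed_supp hT2p hT2pk v hv
                by_contra hne
                exact (nonfix_mono hU hT2p hkerU2 hne) hT2pv
              have hT1neq : T1n (wd K X w) = wd K X w - k := by
                rw [hkdef]; abel
              rw [hT1neq, map_sub, hws w hw, hUk]
            · exfalso
              obtain ⟨hk10, hk1ne, hk1lm⟩ := nonfix_ker_elt hT1n h1
              obtain ⟨hk20, hk2ne, hk2lm⟩ := nonfix_ker_elt hT2p h2
              obtain ⟨w₁, w₂, hwe, hw₁, hw₂⟩ :=
                word_split (show wlen X w = (m - l) + l by omega)
              subst hwe
              have haI : exR K X (m - l) w₂ (wd K X (w₁ * w₂) - T1n (wd K X (w₁ * w₂))) ∈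
                  idealPiece K X N R (m - l) :=
                exR_mem hIdeg ((hker1iff _).mp hk10) w₂
              obtain ⟨ha0, halm⟩ := exR_lm hk1lm hk1ne hw₁
              have hadeg := exR_mem_degSub (m - l) w₂ (wd K X (w₁ * w₂) - T1n (wd K X (w₁ * w₂)))
              set a := exR K X (m - l) w₂ (wd K X (w₁ * w₂) - T1n (wd K X (w₁ * w₂))) with hadef
              have hbJ : exL K X w₁ l (wd K X (w₁ * w₂) - T2p (wd K X (w₁ * w₂))) ∈ Jspace K X N R n :=
                exL_mem hJdeg ((hker2iff _).mp hk20) w₁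
              obtain ⟨hb0, hblm⟩ := exL_lm hk2lm hk2ne hw₂
              have hbdeg := exL_mem_degSub w₁ l (wd K X (w₁ * w₂) - T2p (wd K X (w₁ * w₂)))
              set b := exL K X w₁ l (wd K X (w₁ * w₂) - T2p (wd K X (w₁ * w₂))) with hbdef
              obtain ⟨hz0, hzlm⟩ := lm_mul hadeg hbdeg ha0 hb0
              have hzT1n : T1n (a * b) = 0 :=
                (hker1iff _).mpr (Submodule.mul_mem_mul haI hbdeg)
              have hzT1p : T1p (a * b) = 0 := hker13 _ hzT1n
              have hzT2p : T2p (a * b) = 0 :=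
                (hker2iff _).mpr (Submodule.mul_mem_mul hadeg hbJ)
              have hzU : U (a * b) = 0 := by
                have : a * b ∈ LinearMap.ker U := by
                  rw [hkU]
                  exact Submodule.mem_inf.mpr
                    ⟨LinearMap.mem_ker.mpr hzT1p, LinearMap.mem_ker.mpr hzT2p⟩
                exact LinearMap.mem_ker.mp this
              have := ker_lm_nonfix hU hzU hz0
              rw [hzlm, halm, hblm] at this
              exact this (hws _ hw)
        · rw [hT1n.other w hlen]
          exact hws w hw
      calc U (T1n f) = f.coeff.sum fun w c => c • U (T1n (wd K X w)) := by
            rw [apply_eq_sum T1n f, map_finsuppSum]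
            exact Finsupp.sum_congr fun w _ => by rw [map_smul]
        _ = f.coeff.sum fun w c => c • T1n (wd K X w) :=
            Finsupp.sum_congr fun w hw => by rw [hword w hw]
        _ = T1n f := (apply_eq_sum T1n f).symm
    · -- kernel part
      intro f hf
      have hfk : f ∈ LinearMap.ker U := LinearMap.mem_ker.mpr hf
      rw [hkU] at hfk
      obtain ⟨hf1, hf2⟩ := Submodule.mem_inf.mp hfk
      have h1 : T1p (T1n f) = 0 := by
        have := DFunLike.congr_fun habs.1 f
        simp only [LinearMap.comp_apply] at this
        rw [this]
        exact LinearMap.mem_ker.mp hf1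
      have h2 : T2p (T1n f) = 0 := by
        have := DFunLike.congr_fun concl2 f
        simp only [LinearMap.comp_apply] at this
        rw [← this, LinearMap.mem_ker.mp hf2, map_zero]
      have : T1n f ∈ LinearMap.ker U := by
        rw [hkU]
        exact Submodule.mem_inf.mpr ⟨LinearMap.mem_ker.mpr h1, LinearMap.mem_ker.mpr h2⟩
      exact LinearMap.mem_ker.mp this
  exact ⟨concl1, concl2, habs.2, habs.1⟩

end CCAux7

open CC in
/-- Lemma `commute`.  Suppose the reduced `N`-homogeneous presentation
`⟨X|R⟩` is side-confluent.  For all `n ≥ 1` and `m ≥ l_N(n)`, the operators `F_1^{n,m}` and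
`F_1^{n−1,m} ∨ F_2^{n−1,m}` commute, where `F_1^{n−1,m} ∨ F_2^{n−1,m}` is the unique
reduction operator relative to `X^{(m)}` with kernel `ker(F_1^{n−1,m}) ∩ ker(F_2^{n−1,m})`.
More precisely, `F_1^{n,m}` commutes with `F_2^{n−1,m}`, and
`F_1^{n,m}∘F_1^{n−1,m} = F_1^{n−1,m}∘F_1^{n,m} = F_1^{n−1,m}`. -/
theorem stmt17 (K : Type*) [Field K] (X : Type*) [Fintype X] [LinearOrder X]
    (N : ℕ) (hN : 2 ≤ N) (R : Set (F K X))
    (hhom : NHomogLC1 K X N R) (hred : Reduced K X R)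
    (hside : SideConfluent K X N R)
    (n m : ℕ) (hn : 1 ≤ n) (hnm : lN N n ≤ m)
    (T1n T1p T2p U : F K X →ₗ[K] F K X)
    (hT1n : IsRedOp K X m T1n) (hkT1n : LinearMap.ker T1n = ker1 K X N R n m)
    (hT1p : IsRedOp K X m T1p) (hkT1p : LinearMap.ker T1p = ker1 K X N R (n - 1) m)
    (hT2p : IsRedOp K X m T2p) (hkT2p : LinearMap.ker T2p = ker2 K X N R (n - 1) m)
    (hU : IsRedOp K X m U)
    (hkU : LinearMap.ker U = LinearMap.ker T1p ⊓ LinearMap.ker T2p) :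
    T1n ∘ₗ U = U ∘ₗ T1n ∧
    T1n ∘ₗ T2p = T2p ∘ₗ T1n ∧
    T1n ∘ₗ T1p = T1p ∧
    T1p ∘ₗ T1n = T1p := by
  exact CCAux7.main K X N hN R hhom n m hn hnm T1n T1p T2p U hT1n hkT1n hT1p hkT1p hT2p hkT2p hU hkU
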